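/- Let n ≥ 5 and let x ∈ A_n be a nonidentity element, with conjugacy class C = x^{A_n}. Then the product set (C⁻¹·C)·(C⁻¹·C) contains a double transposition (a permutation that is a product of two disjoint transpositions). -/

import Mathlib

open scoped Pointwise
open Equiv Equiv.Perm

namespace DTAux

variable {α : Type*} [DecidableEq α]

theorem dt_cycleType [Fintype α] {P Q R S : α} (hPQ : P ≠ Q) (hRS : R ≠ S)
    (hPR : P ≠ R) (hPS : P ≠ S) (hQR : Q ≠ R) (hQS : Q ≠ S) :
    (Equiv.swap P Q * Equiv.swap R S).cycleType = {2, 2} := by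
  have hd : (Equiv.swap P Q).Disjoint (Equiv.swap R S) := by
    intro z
    rcases eq_or_ne z P with rfl | h1
    · exact Or.inr (swap_apply_of_ne_of_ne hPR hPS)
    rcases eq_or_ne z Q with rfl | h2
    · exact Or.inr (swap_apply_of_ne_of_ne hQR hQS)
    · exact Or.inl (swap_apply_of_ne_of_ne h1 h2)
  rw [hd.cycleType_mul, (isCycle_swap hPQ).cycleType, (isCycle_swap hRS).cycleType,
    card_support_swap hPQ, card_support_swap hRS]
  rfl

theorem invconj (X : Perm α) (i j : α) :
    X⁻¹ * Equiv.swap i j * X = Equiv.swap (X⁻¹ i) (X⁻¹ j) := by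
  simpa using (swap_apply_apply X⁻¹ i j).symm

theorem key (X : Perm α) (p q r s : α) :
    X⁻¹ * (Equiv.swap p q * Equiv.swap r s)⁻¹ * X * (Equiv.swap p q * Equiv.swap r s)
      = Equiv.swap (X⁻¹ r) (X⁻¹ s) * Equiv.swap (X⁻¹ p) (X⁻¹ q)
        * Equiv.swap p q * Equiv.swap r s := by
  rw [mul_inv_rev, swap_inv, swap_inv, ← invconj X r s, ← invconj X p q]
  group

theorem conj_swap_fix {a c u e : α} (h1 : u ≠ a) (h2 : u ≠ c) (h3 : e ≠ a) (h4 : e ≠ c) :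
    Equiv.swap a c * Equiv.swap u e * Equiv.swap a c = Equiv.swap u e := by
  have h := swap_apply_apply (Equiv.swap a c) u e
  rw [swap_apply_of_ne_of_ne h1 h2, swap_apply_of_ne_of_ne h3 h4, swap_inv] at h
  exact h.symm

set_option maxHeartbeats 1000000 in
set_option maxRecDepth 10000 in
theorem I2a {a b u v : α} (hab : a ≠ b) (hau : a ≠ u) (hav : a ≠ v)
    (hbu : b ≠ u) (hbv : b ≠ v) (huv : u ≠ v) :
    Equiv.swap a v * Equiv.swap u a * Equiv.swap a b * Equiv.swap b u
      = Equiv.swap v a * Equiv.swap a b := by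
  ext z
  rcases eq_or_ne z a with rfl | hza
  · simp only [Perm.mul_apply, swap_apply_def]; split_ifs <;> subst_vars <;> first | rfl | tauto | simp_all
  rcases eq_or_ne z b with rfl | hzb
  · simp only [Perm.mul_apply, swap_apply_def]; split_ifs <;> subst_vars <;> first | rfl | tauto | simp_all
  rcases eq_or_ne z u with rfl | hzu
  · simp only [Perm.mul_apply, swap_apply_def]; split_ifs <;> subst_vars <;> first | rfl | tauto | simp_all
  rcases eq_or_ne z v with rfl | hzv
  · simp only [Perm.mul_apply, swap_apply_def]; split_ifs <;> subst_vars <;> first | rfl | tauto | simp_all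
  · simp only [Perm.mul_apply, swap_apply_def]; split_ifs <;> subst_vars <;> first | rfl | tauto | simp_all

set_option maxHeartbeats 1000000 in
set_option maxRecDepth 10000 in
theorem I2bi {a b c u : α} (hab : a ≠ b) (hac : a ≠ c) (hau : a ≠ u)
    (hbc : b ≠ c) (hbu : b ≠ u) (hcu : c ≠ u) :
    Equiv.swap a c * Equiv.swap u a * Equiv.swap a b * Equiv.swap b c
      = Equiv.swap a b * Equiv.swap c u := by
  ext z
  rcases eq_or_ne z a with rfl | hza
  · simp only [Perm.mul_apply, swap_apply_def]; split_ifs <;> subst_vars <;> first | rfl | tauto | simp_all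
  rcases eq_or_ne z b with rfl | hzb
  · simp only [Perm.mul_apply, swap_apply_def]; split_ifs <;> subst_vars <;> first | rfl | tauto | simp_all
  rcases eq_or_ne z c with rfl | hzc
  · simp only [Perm.mul_apply, swap_apply_def]; split_ifs <;> subst_vars <;> first | rfl | tauto | simp_all
  rcases eq_or_ne z u with rfl | hzu
  · simp only [Perm.mul_apply, swap_apply_def]; split_ifs <;> subst_vars <;> first | rfl | tauto | simp_all
  · simp only [Perm.mul_apply, swap_apply_def]; split_ifs <;> subst_vars <;> first | rfl | tauto | simp_all

theorem stepB {p q r w1 w2 : α} (hpq : p ≠ q) (hpr : p ≠ r) (hqr : q ≠ r)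
    (hpw1 : p ≠ w1) (hpw2 : p ≠ w2) (hqw1 : q ≠ w1) (hqw2 : q ≠ w2)
    (hrw1 : r ≠ w1) (hrw2 : r ≠ w2) (hw12 : w1 ≠ w2) :
    (Equiv.swap p q * Equiv.swap q r) *
      ((Equiv.swap r w1 * Equiv.swap w1 w2) * (Equiv.swap p q * Equiv.swap q r)
        * (Equiv.swap r w1 * Equiv.swap w1 w2)⁻¹)
      = Equiv.swap p r * Equiv.swap q w1 := by
  set K := Equiv.swap r w1 * Equiv.swap w1 w2 with hK
  have h1 : K * (Equiv.swap p q * Equiv.swap q r) * K⁻¹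
      = Equiv.swap (K p) (K q) * Equiv.swap (K q) (K r) := by
    rw [swap_apply_apply K p q, swap_apply_apply K q r]
    group
  have hKp : K p = p := by
    rw [hK, Perm.mul_apply, swap_apply_of_ne_of_ne hpw1 hpw2,
      swap_apply_of_ne_of_ne hpr hpw1]
  have hKq : K q = q := by
    rw [hK, Perm.mul_apply, swap_apply_of_ne_of_ne hqw1 hqw2,
      swap_apply_of_ne_of_ne hqr hqw1]
  have hKr : K r = w1 := by
    rw [hK, Perm.mul_apply, swap_apply_of_ne_of_ne hrw1 hrw2, swap_apply_left]
  rw [h1, hKp, hKq, hKr]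
  have h3 : Equiv.swap p q * Equiv.swap q r * Equiv.swap p q = Equiv.swap p r := by
    have h := swap_mul_swap_mul_swap (x := r) (y := q) (z := p) hqr.symm hpr.symm
    rw [swap_comm q p, swap_comm r q] at h
    exact h
  calc (Equiv.swap p q * Equiv.swap q r) * (Equiv.swap p q * Equiv.swap q w1)
      = (Equiv.swap p q * Equiv.swap q r * Equiv.swap p q) * Equiv.swap q w1 := by group
    _ = Equiv.swap p r * Equiv.swap q w1 := by rw [h3]

def mkA {n : ℕ} (p q r s : Fin n) (h1 : p ≠ q) (h2 : r ≠ s) : alternatingGroup (Fin n) :=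
  ⟨Equiv.swap p q * Equiv.swap r s, Equiv.Perm.mem_alternatingGroup.mpr (by
    rw [map_mul, Equiv.Perm.sign_swap h1, Equiv.Perm.sign_swap h2]
    exact Int.units_mul_self _)⟩

@[simp] theorem coe_mkA {n : ℕ} (p q r s : Fin n) (h1 : p ≠ q) (h2 : r ≠ s) :
    ((mkA p q r s h1 h2 : alternatingGroup (Fin n)) : Perm (Fin n))
      = Equiv.swap p q * Equiv.swap r s := rfl

theorem coe_word1 {n : ℕ} (x g : alternatingGroup (Fin n)) :
    ((x⁻¹ * g⁻¹ * x * g * 1 : alternatingGroup (Fin n)) : Perm (Fin n))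
      = (x : Perm (Fin n))⁻¹ * (g : Perm (Fin n))⁻¹ * (x : Perm (Fin n)) * (g : Perm (Fin n)) := by
  push_cast
  rw [mul_one]

theorem coe_word2 {n : ℕ} (x g k : alternatingGroup (Fin n)) :
    ((x⁻¹ * g⁻¹ * x * g * (k * (x⁻¹ * g⁻¹ * x * g) * k⁻¹) :
        alternatingGroup (Fin n)) : Perm (Fin n))
      = (x : Perm (Fin n))⁻¹ * (g : Perm (Fin n))⁻¹ * (x : Perm (Fin n)) * (g : Perm (Fin n))
        * ((k : Perm (Fin n)) *
            ((x : Perm (Fin n))⁻¹ * (g : Perm (Fin n))⁻¹ * (x : Perm (Fin n)) * (g : Perm (Fin n)))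
          * (k : Perm (Fin n))⁻¹) := by
  push_cast
  rfl

theorem fresh4 {n : ℕ} (hn : 5 ≤ n) (p q r s : Fin n) :
    ∃ z : Fin n, z ≠ p ∧ z ≠ q ∧ z ≠ r ∧ z ≠ s := by
  by_contra hcon
  push_neg at hcon
  have hsub : (Finset.univ : Finset (Fin n)) ⊆ {p, q, r, s} := by
    intro z _
    simp only [Finset.mem_insert, Finset.mem_singleton]
    by_cases h1 : z = p
    · exact Or.inl h1
    by_cases h2 : z = q
    · exact Or.inr (Or.inl h2)
    by_cases h3 : z = r
    · exact Or.inr (Or.inr (Or.inl h3))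
    · exact Or.inr (Or.inr (Or.inr (hcon z h1 h2 h3)))
  have h1 := Finset.card_le_card hsub
  have h4 : ({r, s} : Finset (Fin n)).card ≤ 2 := by
    apply le_trans (Finset.card_insert_le _ _)
    simp
  have h3 : ({q, r, s} : Finset (Fin n)).card ≤ 3 := by
    have := Finset.card_insert_le q ({r, s} : Finset (Fin n))
    omega
  have h2 : ({p, q, r, s} : Finset (Fin n)).card ≤ 4 := by
    have := Finset.card_insert_le p ({q, r, s} : Finset (Fin n))
    omega
  rw [Finset.card_univ, Fintype.card_fin] at h1
  omega

end DTAux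

open scoped Pointwise

/-- For `n ≥ 5` and `1 ≠ x ∈ A_n` with conjugacy class `C`, the set
`(C⁻¹C)(C⁻¹C)` contains a double transposition. -/
theorem double_transposition_mem_class_prod (n : ℕ) (hn : 5 ≤ n)
    (x : alternatingGroup (Fin n)) (hx : x ≠ 1) :
    ∃ σ ∈ ({z : alternatingGroup (Fin n) | IsConj x z}⁻¹ *
            {z : alternatingGroup (Fin n) | IsConj x z}) *
          ({z : alternatingGroup (Fin n) | IsConj x z}⁻¹ *
            {z : alternatingGroup (Fin n) | IsConj x z}),
      (σ : Equiv.Perm (Fin n)).cycleType = {2, 2} := by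
  classical
  set C : Set (alternatingGroup (Fin n)) := {z : alternatingGroup (Fin n) | IsConj x z} with hC
  have hmemC : ∀ q : alternatingGroup (Fin n), q⁻¹ * x * q ∈ C := by
    intro q
    show IsConj x (q⁻¹ * x * q)
    exact isConj_iff.mpr ⟨q⁻¹, by rw [inv_inv]⟩
  have hD : ∀ p q : alternatingGroup (Fin n),
      (p⁻¹ * x * p)⁻¹ * (q⁻¹ * x * q) ∈ C⁻¹ * C := fun p q =>
    Set.mul_mem_mul (Set.inv_mem_inv.mpr (hmemC p)) (hmemC q)
  have hDc : ∀ g k : alternatingGroup (Fin n),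
      k * (x⁻¹ * g⁻¹ * x * g) * k⁻¹ ∈ C⁻¹ * C := by
    intro g k
    have h := hD k⁻¹ (g * k⁻¹)
    have e : ((k⁻¹)⁻¹ * x * k⁻¹)⁻¹ * ((g * k⁻¹)⁻¹ * x * (g * k⁻¹))
        = k * (x⁻¹ * g⁻¹ * x * g) * k⁻¹ := by group
    rwa [e] at h
  have hD1 : ∀ g : alternatingGroup (Fin n), x⁻¹ * g⁻¹ * x * g ∈ C⁻¹ * C := by
    intro g
    have h := hDc g 1
    rwa [one_mul, inv_one, mul_one] at h
  have h1D : (1 : alternatingGroup (Fin n)) ∈ C⁻¹ * C := by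
    have h := hD 1 1
    have e : ((1 : alternatingGroup (Fin n))⁻¹ * x * 1)⁻¹ * ((1 : alternatingGroup (Fin n))⁻¹ * x * 1)
        = 1 := by group
    rwa [e] at h
  have ex1 : ∀ (g : alternatingGroup (Fin n)) (P Q R S : Fin n),
      P ≠ Q → R ≠ S → P ≠ R → P ≠ S → Q ≠ R → Q ≠ S →
      ((x⁻¹ * g⁻¹ * x * g * 1 : alternatingGroup (Fin n)) : Equiv.Perm (Fin n))
        = Equiv.swap P Q * Equiv.swap R S →
      ∃ σ ∈ (C⁻¹ * C) * (C⁻¹ * C), (σ : Equiv.Perm (Fin n)).cycleType = {2, 2} := by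
    intro g P Q R S h1 h2 h3 h4 h5 h6 hEq
    exact ⟨x⁻¹ * g⁻¹ * x * g * 1, Set.mul_mem_mul (hD1 g) h1D,
      by rw [hEq]; exact DTAux.dt_cycleType h1 h2 h3 h4 h5 h6⟩
  have ex2 : ∀ (g k : alternatingGroup (Fin n)) (P Q R S : Fin n),
      P ≠ Q → R ≠ S → P ≠ R → P ≠ S → Q ≠ R → Q ≠ S →
      ((x⁻¹ * g⁻¹ * x * g * (k * (x⁻¹ * g⁻¹ * x * g) * k⁻¹) :
          alternatingGroup (Fin n)) : Equiv.Perm (Fin n))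
        = Equiv.swap P Q * Equiv.swap R S →
      ∃ σ ∈ (C⁻¹ * C) * (C⁻¹ * C), (σ : Equiv.Perm (Fin n)).cycleType = {2, 2} := by
    intro g k P Q R S h1 h2 h3 h4 h5 h6 hEq
    exact ⟨x⁻¹ * g⁻¹ * x * g * (k * (x⁻¹ * g⁻¹ * x * g) * k⁻¹),
      Set.mul_mem_mul (hD1 g) (hDc g k),
      by rw [hEq]; exact DTAux.dt_cycleType h1 h2 h3 h4 h5 h6⟩
  obtain ⟨X, hXdef⟩ : ∃ X : Equiv.Perm (Fin n), (x : Equiv.Perm (Fin n)) = X := ⟨_, rfl⟩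
  have hXne : X ≠ 1 := by
    intro h
    apply hx
    apply Subtype.ext
    rw [hXdef]
    exact h
  obtain ⟨a, ha⟩ : ∃ a, X a ≠ a := by
    by_contra h
    push_neg at h
    exact hXne (Equiv.ext h)
  obtain ⟨b, hb⟩ : ∃ b, X a = b := ⟨_, rfl⟩
  have hba : b ≠ a := by rw [← hb]; exact ha
  have hab : a ≠ b := hba.symm
  have hiXb : X⁻¹ b = a := X.injective (by rw [← Equiv.Perm.mul_apply, mul_inv_cancel, Equiv.Perm.one_apply, hb])
  by_cases hXb2 : X b = a
  · -- Case 1 : a is in a 2-cycle of X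
    have hiXa : X⁻¹ a = b := X.injective (by rw [← Equiv.Perm.mul_apply, mul_inv_cancel, Equiv.Perm.one_apply, hXb2])
    obtain ⟨c, hca, hcb, -, -⟩ := DTAux.fresh4 hn a b b b
    by_cases hXc : X c = c
    · -- Case 1a : X fixes c ; t is the 3-cycle (a c b)
      have hiXc : X⁻¹ c = c := X.injective (by rw [← Equiv.Perm.mul_apply, mul_inv_cancel, Equiv.Perm.one_apply, hXc])
      obtain ⟨w1, hw1a, hw1b, hw1c, -⟩ := DTAux.fresh4 hn a b c c
      obtain ⟨w2, hw2a, hw2b, hw2c, hw2w1⟩ := DTAux.fresh4 hn a b c w1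
      apply ex2 (DTAux.mkA a b b c hab hcb.symm) (DTAux.mkA b w1 w1 w2 hw1b.symm hw2w1.symm)
        a b c w1 hab hw1c.symm hca.symm hw1a.symm hcb.symm hw1b.symm
      rw [DTAux.coe_word2, DTAux.coe_mkA, DTAux.coe_mkA, hXdef,
        DTAux.key X a b b c, hiXa, hiXb, hiXc]
      have hW : Equiv.swap a c * Equiv.swap b a * Equiv.swap a b * Equiv.swap b c
          = Equiv.swap a c * Equiv.swap c b := by
        rw [Equiv.swap_comm b a, Equiv.mul_swap_mul_self, Equiv.swap_comm b c]
      rw [hW]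
      exact DTAux.stepB hca.symm hab hcb hw1a.symm hw2a.symm hw1c.symm hw2c.symm
        hw1b.symm hw2b.symm hw2w1.symm
    · -- Case 1b : X moves c ; t is a double transposition
      obtain ⟨v, hv⟩ : ∃ v, X⁻¹ c = v := ⟨_, rfl⟩
      have hXv : X v = c := by rw [← hv, ← Equiv.Perm.mul_apply, mul_inv_cancel, Equiv.Perm.one_apply]
      have hva : v ≠ a := by
        intro h
        rw [h] at hXv
        exact hcb (hXv.symm.trans hb)
      have hvb : v ≠ b := by
        intro h
        rw [h] at hXv
        exact hca (hXv.symm.trans hXb2)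
      have hvc : v ≠ c := by
        intro h
        rw [h] at hXv
        exact hXc hXv
      apply ex1 (DTAux.mkA a b b c hab hcb.symm) a v b c hva.symm hcb.symm hab hca.symm hvb hvc
      rw [DTAux.coe_word1, DTAux.coe_mkA, hXdef, DTAux.key X a b b c, hiXa, hiXb, hv,
        Equiv.swap_comm b a, Equiv.mul_swap_mul_self]
  · -- Case 2 : X² a ≠ a
    obtain ⟨u, hu⟩ : ∃ u, X⁻¹ a = u := ⟨_, rfl⟩
    have hXu : X u = a := by rw [← hu, ← Equiv.Perm.mul_apply, mul_inv_cancel, Equiv.Perm.one_apply]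
    have hua : u ≠ a := by
      intro h
      rw [h] at hXu
      exact ha hXu
    have hub : u ≠ b := by
      intro h
      rw [h] at hXu
      exact hXb2 hXu
    obtain ⟨v, hv⟩ : ∃ v, X⁻¹ u = v := ⟨_, rfl⟩
    have hXv : X v = u := by rw [← hv, ← Equiv.Perm.mul_apply, mul_inv_cancel, Equiv.Perm.one_apply]
    by_cases hvb : v = b
    · -- Case 2b : X has the 3-cycle (a b u)
      have hXbu : X b = u := by rw [← hvb]; exact hXv
      obtain ⟨c, hca, hcb, hcu, -⟩ := DTAux.fresh4 hn a b u u
      by_cases hXc : X c = c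
      · -- Case 2b-i : X fixes c ; t = (a b)(c u)
        have hiXc : X⁻¹ c = c := X.injective (by rw [← Equiv.Perm.mul_apply, mul_inv_cancel, Equiv.Perm.one_apply, hXc])
        apply ex1 (DTAux.mkA a b b c hab hcb.symm) a b c u hab hcu hca.symm hua.symm
          hcb.symm hub.symm
        rw [DTAux.coe_word1, DTAux.coe_mkA, hXdef, DTAux.key X a b b c, hu, hiXb, hiXc]
        exact DTAux.I2bi hab hca.symm hua.symm hcb.symm hub.symm hcu
      · -- Case 2b-ii : X moves c
        obtain ⟨d, hd⟩ : ∃ d, X c = d := ⟨_, rfl⟩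
        obtain ⟨e, he⟩ : ∃ e, X⁻¹ c = e := ⟨_, rfl⟩
        have hXe : X e = c := by rw [← he, ← Equiv.Perm.mul_apply, mul_inv_cancel, Equiv.Perm.one_apply]
        have hdc : d ≠ c := by
          intro h
          rw [h] at hd
          exact hXc hd
        have hda : d ≠ a := by
          intro h
          rw [h] at hd
          exact hcu (X.injective (hd.trans hXu.symm))
        have hdb : d ≠ b := by
          intro h
          rw [h] at hd
          exact hca (X.injective (hd.trans hb.symm))
        have hdu : d ≠ u := by
          intro h
          rw [h] at hd
          exact hcb (X.injective (hd.trans hXbu.symm))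
        have hea : e ≠ a := by
          intro h
          rw [h] at hXe
          exact hcb (hXe.symm.trans hb)
        have heb : e ≠ b := by
          intro h
          rw [h] at hXe
          exact hcu (hXe.symm.trans hXbu)
        have heu : e ≠ u := by
          intro h
          rw [h] at hXe
          exact hca (hXe.symm.trans hXu)
        have hec : e ≠ c := by
          intro h
          rw [h] at hXe
          exact hXc hXe
        have hiXd : X⁻¹ d = c := X.injective (by rw [← Equiv.Perm.mul_apply, mul_inv_cancel, Equiv.Perm.one_apply, hd])
        by_cases hed : e = d
        · -- Case 2b-ii-α : c is in a 2-cycle of X ; t is the 3-cycle (u d b)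
          obtain ⟨w1, hw1u, hw1d, hw1b, -⟩ := DTAux.fresh4 hn u d b b
          obtain ⟨w2, hw2u, hw2d, hw2b, hw2w1⟩ := DTAux.fresh4 hn u d b w1
          apply ex2 (DTAux.mkA a c b d hca.symm hdb.symm)
            (DTAux.mkA b w1 w1 w2 hw1b.symm hw2w1.symm)
            u b d w1 hub hw1d.symm hdu.symm hw1u.symm hdb.symm hw1b.symm
          rw [DTAux.coe_word2, DTAux.coe_mkA, DTAux.coe_mkA, hXdef,
            DTAux.key X a c b d, hiXb, hiXd, hu, he, hed]
          have hW : Equiv.swap a c * Equiv.swap u d * Equiv.swap a c * Equiv.swap b d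
              = Equiv.swap u d * Equiv.swap d b := by
            rw [DTAux.conj_swap_fix hua hcu.symm hda hdc, Equiv.swap_comm b d]
          rw [hW]
          exact DTAux.stepB hdu.symm hub hdb hw1u.symm hw2u.symm hw1d.symm hw2d.symm
            hw1b.symm hw2b.symm hw2w1.symm
        · -- Case 2b-ii-β : t = (u e)(b d)
          apply ex1 (DTAux.mkA a c b d hca.symm hdb.symm) u e b d heu.symm hdb.symm hub
            hdu.symm heb hed
          rw [DTAux.coe_word1, DTAux.coe_mkA, hXdef, DTAux.key X a c b d, hiXb, hiXd, hu, he,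
            DTAux.conj_swap_fix hua hcu.symm hea hec]
    · -- Case 2a : t is the 3-cycle (v a b)
      have hva : v ≠ a := by
        intro h
        rw [h] at hXv
        exact hub (hXv.symm.trans hb)
      have hvu : v ≠ u := by
        intro h
        rw [h] at hXv
        exact hua (hXv.symm.trans hXu)
      obtain ⟨w1, hw1v, hw1a, hw1b, -⟩ := DTAux.fresh4 hn v a b b
      obtain ⟨w2, hw2v, hw2a, hw2b, hw2w1⟩ := DTAux.fresh4 hn v a b w1
      apply ex2 (DTAux.mkA a b b u hab hub.symm) (DTAux.mkA b w1 w1 w2 hw1b.symm hw2w1.symm)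
        v b a w1 hvb hw1a.symm hva hw1v.symm hba hw1b.symm
      rw [DTAux.coe_word2, DTAux.coe_mkA, DTAux.coe_mkA, hXdef,
        DTAux.key X a b b u, hiXb, hv, hu]
      have hW : Equiv.swap a v * Equiv.swap u a * Equiv.swap a b * Equiv.swap b u
          = Equiv.swap v a * Equiv.swap a b := by
        exact DTAux.I2a hab hua.symm hva.symm hub.symm (Ne.symm hvb) hvu.symm
      rw [hW]
      exact DTAux.stepB hva hvb hab hw1v.symm hw2v.symm hw1a.symm hw2a.symm
        hw1b.symm hw2b.symm hw2w1.symm
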